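/- A Brandt semigroup B(G, I) has the Howson property if and only if the group G has the Howson property. -/
import Mathlib


inductive InvGen {S : Type*} [Mul S] [Inv S] (X : Set S) : S → Prop
  | base {x : S} : x ∈ X → InvGen X x
  | mul {a b : S} : InvGen X a → InvGen X b → InvGen X (a * b)
  | inv {a : S} : InvGen X a → InvGen X a⁻¹

def IsInvSub {S : Type*} [Mul S] [Inv S] (T : Set S) : Prop :=
  (∀ a ∈ T, ∀ b ∈ T, a * b ∈ T) ∧ ∀ a ∈ T, a⁻¹ ∈ T

def InvFG {S : Type*} [Mul S] [Inv S] (T : Set S) : Prop :=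
  ∃ X : Finset S, ↑X ⊆ T ∧ T = {s | InvGen (↑X : Set S) s}

def Howson (S : Type*) [Mul S] [Inv S] : Prop :=
  ∀ U V : Set S, IsInvSub U → IsInvSub V → InvFG U → InvFG V → InvFG (U ∩ V)
abbrev Brandt (G I : Type*) := Option (I × G × I)

open Classical in
noncomputable instance {G I : Type*} [Group G] : Mul (Brandt G I) :=
  ⟨fun a b =>
    match a, b with
    | some (i, g, j), some (j', h, k) => if j = j' then some (i, g * h, k) else none
    | _, _ => none⟩

instance {G I : Type*} [Group G] : Inv (Brandt G I) :=
  ⟨fun a =>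
    match a with
    | some (i, g, j) => some (j, g⁻¹, i)
    | none => none⟩
def HowsonGroup (G : Type*) [Group G] : Prop :=
  ∀ H K : Subgroup G, H.FG → K.FG → (H ⊓ K).FG

section Aux
open Classical
variable {G I : Type*} [Group G]

@[simp] lemma bnone_mul (b : Brandt G I) : (none : Brandt G I) * b = none := rfl
@[simp] lemma bmul_none (a : Brandt G I) : a * (none : Brandt G I) = none := by
  rcases a with _ | ⟨i, g, j⟩ <;> rfl
@[simp] lemma bsome_mul_some (i : I) (g : G) (j : I) (h : G) (k : I) :
    (some (i, g, j) : Brandt G I) * some (j, h, k) = some (i, g * h, k) := by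
  show (if j = j then (some (i, g * h, k) : Brandt G I) else none) = some (i, g * h, k)
  rw [if_pos rfl]
lemma bsome_mul_some_ne {i j j' k : I} {g h : G} (hj : j ≠ j') :
    (some (i, g, j) : Brandt G I) * some (j', h, k) = none := by
  show (if j = j' then (some (i, g * h, k) : Brandt G I) else none) = none
  rw [if_neg hj]
@[simp] lemma binv_some (i : I) (g : G) (j : I) :
    (some (i, g, j) : Brandt G I)⁻¹ = some (j, g⁻¹, i) := rfl
@[simp] lemma binv_none : (none : Brandt G I)⁻¹ = (none : Brandt G I) := rfl

lemma bmul_eq_some {a b : Brandt G I} {x z : I} {g : G} (h : a * b = some (x, g, z)) :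
    ∃ g1 y g2, a = some (x, g1, y) ∧ b = some (y, g2, z) ∧ g = g1 * g2 := by
  rcases a with _ | ⟨i, g1, j⟩
  · simp at h
  rcases b with _ | ⟨j', g2, k⟩
  · simp at h
  by_cases hj : j = j'
  · subst hj
    rw [bsome_mul_some] at h
    simp only [Option.some.injEq, Prod.mk.injEq] at h
    obtain ⟨rfl, h2, rfl⟩ := h
    exact ⟨g1, j, g2, rfl, rfl, h2.symm⟩
  · rw [bsome_mul_some_ne hj] at h; exact absurd h (by simp)

lemma binv_eq_some {a : Brandt G I} {x z : I} {g : G} (h : a⁻¹ = some (x, g, z)) :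
    a = some (z, g⁻¹, x) := by
  rcases a with _ | ⟨i, g1, j⟩
  · simp at h
  · rw [binv_some] at h
    simp only [Option.some.injEq, Prod.mk.injEq] at h
    obtain ⟨rfl, h2, rfl⟩ := h
    simp [← h2]
end Aux
section Aux2
open Classical
set_option linter.unusedSectionVars false
variable {G I : Type*} [Group G]

lemma invGen_subset {S : Type*} [Mul S] [Inv S] {X T : Set S}
    (hX : X ⊆ T) (hT : IsInvSub T) {s : S} (h : InvGen X s) : s ∈ T := by
  induction h with
  | base h => exact hX h
  | mul _ _ ha hb => exact hT.1 _ ha _ hb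
  | inv _ ha => exact hT.2 _ ha

def Dom (T : Set (Brandt G I)) : Set I := {i | ∃ g : G, some (i, g, i) ∈ T}
def Hset (T : Set (Brandt G I)) (i : I) : Set G := {g | some (i, g, i) ∈ T}

lemma mem_Hset {T : Set (Brandt G I)} {i : I} {g : G} :
    g ∈ Hset T i ↔ some (i, g, i) ∈ T := Iff.rfl

lemma one_mem_Hset {T : Set (Brandt G I)} (hT : IsInvSub T) {i : I} (hi : i ∈ Dom T) :
    (1 : G) ∈ Hset T i := by
  obtain ⟨g, hg⟩ := hi
  have h2 := hT.1 _ hg _ (hT.2 _ hg)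
  rw [binv_some, bsome_mul_some, mul_inv_cancel] at h2
  exact h2

def Hsub (T : Set (Brandt G I)) (hT : IsInvSub T) {i : I} (hi : i ∈ Dom T) : Subgroup G where
  carrier := Hset T i
  one_mem' := one_mem_Hset hT hi
  mul_mem' := fun {a b} ha hb => by
    have h2 := hT.1 _ ha _ hb
    rwa [bsome_mul_some] at h2
  inv_mem' := fun {a} ha => by
    have h2 := hT.2 _ ha
    rwa [binv_some] at h2

lemma mem_Hsub {T : Set (Brandt G I)} {hT : IsInvSub T} {i : I} {hi : i ∈ Dom T} {g : G} :
    g ∈ Hsub T hT hi ↔ some (i, g, i) ∈ T := Iff.rfl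

noncomputable def idxF : Brandt G I → Finset I
  | some (a, _, b) => {a, b}
  | none => ∅

lemma invGen_idx {X : Finset (Brandt G I)} {t : Brandt G I} (ht : InvGen (↑X : Set _) t) :
    ∀ a g b, t = some (a, g, b) → a ∈ X.biUnion idxF ∧ b ∈ X.biUnion idxF := by
  induction ht with
  | base h =>
    rintro a g b rfl
    constructor <;> exact Finset.mem_biUnion.mpr ⟨_, h, by simp [idxF]⟩
  | mul _ _ ih1 ih2 =>
    rintro a g b hab
    obtain ⟨g1, y, g2, h1, h2, rfl⟩ := bmul_eq_some hab
    exact ⟨(ih1 _ _ _ h1).1, (ih2 _ _ _ h2).2⟩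
  | inv _ ih =>
    rintro a g b hab
    have h1 := binv_eq_some hab
    exact ⟨(ih _ _ _ h1).2, (ih _ _ _ h1).1⟩

lemma dom_finite {T : Set (Brandt G I)} (hFG : InvFG T) : (Dom T).Finite := by
  obtain ⟨X, hXT, hT⟩ := hFG
  subst hT
  apply Set.Finite.subset (X.biUnion idxF).finite_toSet
  rintro i ⟨g, hg⟩
  exact (invGen_idx hg i g i rfl).1

lemma mem_Dom_left {T : Set (Brandt G I)} (hT : IsInvSub T) {a b : I} {g : G}
    (h : some (a, g, b) ∈ T) : a ∈ Dom T := by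
  have h2 := hT.1 _ h _ (hT.2 _ h)
  rw [binv_some, bsome_mul_some, mul_inv_cancel] at h2
  exact ⟨1, h2⟩

lemma mem_Dom_right {T : Set (Brandt G I)} (hT : IsInvSub T) {a b : I} {g : G}
    (h : some (a, g, b) ∈ T) : b ∈ Dom T := by
  have h2 := hT.1 _ (hT.2 _ h) _ h
  rw [binv_some, bsome_mul_some, inv_mul_cancel] at h2
  exact ⟨1, h2⟩

end Aux2
section Aux3
open Classical
set_option linter.unusedSectionVars false
variable {G I : Type*} [Group G]

lemma fg_of_invFG {T : Set (Brandt G I)} (hT : IsInvSub T) (hFG : InvFG T)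
    {i : I} (hi : i ∈ Dom T) : (Hsub T hT hi).FG := by
  obtain ⟨X, hXT, hTX⟩ := hFG
  -- choose connecting elements
  have hchoice : ∀ j : I, ∃ g : G, (∃ g', some (i, g', j) ∈ T) → some (i, g, j) ∈ T := by
    intro j
    by_cases h : ∃ g', some (i, g', j) ∈ T
    · obtain ⟨g, hg⟩ := h; exact ⟨g, fun _ => hg⟩
    · exact ⟨1, fun h' => absurd h' h⟩
  choose c hc using hchoice
  -- conn propagation
  have hprop : ∀ a (g : G) b, some (a, g, b) ∈ T → (∃ g', some (i, g', a) ∈ T) →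
      (∃ g', some (i, g', b) ∈ T) := by
    rintro a g b h ⟨g', h'⟩
    refine ⟨g' * g, ?_⟩
    have h2 := hT.1 _ h' _ h
    rwa [bsome_mul_some] at h2
  set S : Set G :=
    (fun t => match t with | some (a, g, b) => c a * g * (c b)⁻¹ | none => 1) ''
      ((↑X : Set (Brandt G I)) ∩ {t | ∃ a g b, t = some (a, g, b) ∧ ∃ g', some (i, g', a) ∈ T})
    with hSdef
  have hSfin : S.Finite :=
    Set.Finite.image _ (Set.Finite.subset X.finite_toSet Set.inter_subset_left)
  have hSsub : S ⊆ Hset T i := by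
    rintro s ⟨t, ⟨htX, a, g, b, rfl, hca⟩, rfl⟩
    have htT : some (a, g, b) ∈ T := hXT htX
    have hcb := hprop a g b htT hca
    have h1 : some (i, c a, a) ∈ T := hc a hca
    have h2 : some (i, c b, b) ∈ T := hc b hcb
    have h3 := hT.1 _ (hT.1 _ h1 _ htT) _ (hT.2 _ h2)
    rwa [bsome_mul_some, binv_some, bsome_mul_some] at h3
  -- main induction
  have main : ∀ t, InvGen (↑X : Set (Brandt G I)) t → ∀ a g b, t = some (a, g, b) →
      (∃ g', some (i, g', a) ∈ T) → c a * g * (c b)⁻¹ ∈ Subgroup.closure S := by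
    intro t ht
    induction ht with
    | base h =>
      rintro a g b rfl hca
      exact Subgroup.subset_closure ⟨_, ⟨h, a, g, b, rfl, hca⟩, rfl⟩
    | mul h1 h2 ih1 ih2 =>
      rintro a g b hab hca
      obtain ⟨g1, y, g2, e1, e2, rfl⟩ := bmul_eq_some hab
      have ht1T : some (a, g1, y) ∈ T := e1 ▸ invGen_subset hXT hT h1
      have hcy := hprop a g1 y ht1T hca
      have m1 := ih1 a g1 y e1 hca
      have m2 := ih2 y g2 b e2 hcy
      have := mul_mem m1 m2
      rwa [show c a * g1 * (c y)⁻¹ * (c y * g2 * (c b)⁻¹) = c a * (g1 * g2) * (c b)⁻¹ by group]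
        at this
    | inv h1 ih =>
      rintro a g b hab hca
      have e1 := binv_eq_some hab
      -- underlying element is some (b, g⁻¹, a) ∈ T
      have htT : some (a, g, b) ∈ T := by
        have := hT.2 _ (invGen_subset hXT hT h1)
        rw [e1] at this; rwa [binv_some, inv_inv] at this
      have hcb := hprop a g b htT hca
      have m1 := ih b g⁻¹ a e1 hcb
      have := inv_mem m1
      rwa [show (c b * g⁻¹ * (c a)⁻¹)⁻¹ = c a * g * (c b)⁻¹ by group] at this
  have hci : some (i, c i, i) ∈ T := hc i hi
  have heq : Subgroup.closure S = Hsub T hT hi := by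
    apply le_antisymm
    · exact (Subgroup.closure_le _).mpr hSsub
    · intro g hg
      have hg' : some (i, (c i)⁻¹ * g * c i, i) ∈ T := by
        have h2 := hT.1 _ (hT.1 _ (hT.2 _ hci) _ hg) _ hci
        rwa [binv_some, bsome_mul_some, bsome_mul_some] at h2
      have := main _ (by rw [hTX] at hg'; exact hg') i ((c i)⁻¹ * g * c i) i rfl hi
      rwa [show c i * ((c i)⁻¹ * g * c i) * (c i)⁻¹ = g by group] at this
  exact (Subgroup.fg_iff _).mpr ⟨S, heq, hSfin⟩

end Aux3
section Aux4
open Classical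
set_option linter.unusedSectionVars false
variable {G I : Type*} [Group G]

lemma invFG_of_struct {T : Set (Brandt G I)} (hT : IsInvSub T) (hD : (Dom T).Finite)
    (hH : ∀ (j : I) (hj : j ∈ Dom T), (Hsub T hT hj).FG) : InvFG T := by
  -- generating sets for the local groups
  have hSg : ∀ j : I, ∃ Sj : Set G, Sj.Finite ∧ (∀ h ∈ Sj, some (j, h, j) ∈ T) ∧
      (∀ h : G, some (j, h, j) ∈ T → h ∈ Subgroup.closure Sj) := by
    intro j
    by_cases hj : j ∈ Dom T
    · obtain ⟨Sj, hclos, hfin⟩ := (Subgroup.fg_iff _).mp (hH j hj)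
      refine ⟨Sj, hfin, ?_, ?_⟩
      · intro h hh
        exact (hclos ▸ Subgroup.subset_closure hh : h ∈ Hsub T hT hj)
      · intro h hh
        rw [hclos]; exact hh
    · exact ⟨∅, Set.finite_empty, by simp, fun h hh => absurd ⟨h, hh⟩ hj⟩
  choose Sg hSgfin hSgmem hSggen using hSg
  -- connecting elements
  have hcc : ∀ p : I × I, ∃ g : G, (∃ g', some (p.1, g', p.2) ∈ T) →
      some (p.1, g, p.2) ∈ T := by
    intro p
    by_cases h : ∃ g', some (p.1, g', p.2) ∈ T
    · obtain ⟨g, hg⟩ := h; exact ⟨g, fun _ => hg⟩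
    · exact ⟨1, fun h' => absurd h' h⟩
  choose cc hcc using hcc
  set E : Set (I × I) := {p | ∃ g, some (p.1, g, p.2) ∈ T} with hEdef
  have hEfin : E.Finite := by
    apply Set.Finite.subset (hD.prod hD)
    rintro ⟨a, b⟩ ⟨g, hg⟩
    exact ⟨mem_Dom_left hT hg, mem_Dom_right hT hg⟩
  set Y : Set (Brandt G I) :=
    (T ∩ {none}) ∪ ((fun p => some (p.1, cc p, p.2)) '' E) ∪
      ⋃ j ∈ Dom T, (fun h => (some (j, h, j) : Brandt G I)) '' Sg j with hYdef
  have hYfin : Y.Finite := by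
    apply Set.Finite.union (Set.Finite.union ?_ (hEfin.image _))
      (hD.biUnion fun j _ => (hSgfin j).image _)
    exact Set.Finite.subset (Set.finite_singleton none) Set.inter_subset_right
  have hYT : Y ⊆ T := by
    rintro t ((⟨ht, -⟩ | ⟨p, hp, rfl⟩) | ht)
    · exact ht
    · exact hcc p hp
    · simp only [Set.mem_iUnion] at ht
      obtain ⟨j, hj, h, hh, rfl⟩ := ht
      exact hSgmem j h hh
  have hmain : T = {s | InvGen Y s} := by
    ext t
    constructor
    · intro ht
      rcases t with _ | ⟨a, g, b⟩
      · exact InvGen.base (Or.inl (Or.inl ⟨ht, rfl⟩))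
      · have hbD : b ∈ Dom T := mem_Dom_right hT ht
        have subclaim : ∀ h : G, h ∈ Subgroup.closure (Sg b) → InvGen Y (some (b, h, b)) := by
          intro h hcl
          induction hcl using Subgroup.closure_induction with
          | mem x hx =>
            exact InvGen.base (Or.inr (Set.mem_biUnion hbD ⟨x, hx, rfl⟩))
          | one =>
            have hbbE : (b, b) ∈ E := hbD
            have h1 : InvGen Y (some (b, cc (b, b), b)) :=
              InvGen.base (Or.inl (Or.inr ⟨(b, b), hbbE, rfl⟩))
            have h2 := InvGen.mul h1 (InvGen.inv h1)
            rwa [binv_some, bsome_mul_some, mul_inv_cancel] at h2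
          | mul x y hx hy ihx ihy =>
            have h2 := InvGen.mul ihx ihy
            rwa [bsome_mul_some] at h2
          | inv x hx ihx =>
            have h2 := InvGen.inv ihx
            rwa [binv_some] at h2
        have habE : (a, b) ∈ E := ⟨g, ht⟩
        have h1 : InvGen Y (some (a, cc (a, b), b)) :=
          InvGen.base (Or.inl (Or.inr ⟨(a, b), habE, rfl⟩))
        have hh : some (b, (cc (a, b))⁻¹ * g, b) ∈ T := by
          have h2 := hT.1 _ (hT.2 _ (hcc (a, b) habE)) _ ht
          rwa [binv_some, bsome_mul_some] at h2
        have h3 := InvGen.mul h1 (subclaim _ (hSggen b _ hh))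
        rwa [bsome_mul_some, mul_inv_cancel_left] at h3
    · exact fun h => invGen_subset hYT hT h
  refine ⟨hYfin.toFinset, ?_, ?_⟩
  · rw [Set.Finite.coe_toFinset]; exact hYT
  · rw [Set.Finite.coe_toFinset]; exact hmain

end Aux4
section Aux5
open Classical
set_option linter.unusedSectionVars false
variable {G I : Type*} [Group G]

lemma isInvSub_inter {U V : Set (Brandt G I)} (hU : IsInvSub U) (hV : IsInvSub V) :
    IsInvSub (U ∩ V) :=
  ⟨fun a ha b hb => ⟨hU.1 a ha.1 b hb.1, hV.1 a ha.2 b hb.2⟩,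
   fun a ha => ⟨hU.2 a ha.1, hV.2 a ha.2⟩⟩

def Usg (H : Subgroup G) (i : I) : Set (Brandt G I) :=
  {s | ∃ h ∈ H, s = some (i, h, i)}

lemma isInvSub_Usg (H : Subgroup G) (i : I) : IsInvSub (Usg H i) := by
  constructor
  · rintro a ⟨h1, hh1, rfl⟩ b ⟨h2, hh2, rfl⟩
    exact ⟨h1 * h2, H.mul_mem hh1 hh2, by rw [bsome_mul_some]⟩
  · rintro a ⟨h1, hh1, rfl⟩
    exact ⟨h1⁻¹, H.inv_mem hh1, by rw [binv_some]⟩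

lemma mem_Dom_Usg (H : Subgroup G) (i : I) : i ∈ Dom (Usg H i) :=
  ⟨1, 1, H.one_mem, rfl⟩

lemma dom_Usg (H : Subgroup G) (i : I) : Dom (Usg H i) = {i} := by
  ext j
  constructor
  · rintro ⟨g, h, hh, heq⟩
    simp only [Option.some.injEq, Prod.mk.injEq] at heq
    exact heq.1
  · rintro rfl; exact mem_Dom_Usg H _

lemma Hsub_Usg (H : Subgroup G) (i : I) (hi : i ∈ Dom (Usg H i)) :
    Hsub (Usg H i) (isInvSub_Usg H i) hi = H := by
  ext g
  rw [mem_Hsub]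
  constructor
  · rintro ⟨h, hh, heq⟩
    simp only [Option.some.injEq, Prod.mk.injEq] at heq
    rwa [heq.2.1]
  · intro hg; exact ⟨g, hg, rfl⟩

lemma invFG_Usg (H : Subgroup G) (hH : H.FG) (i : I) : InvFG (Usg H i) := by
  apply invFG_of_struct (isInvSub_Usg H i)
  · rw [dom_Usg]; exact Set.finite_singleton i
  · intro j hj
    have hj' : j = i := by rwa [dom_Usg, Set.mem_singleton_iff] at hj
    subst hj'
    rw [Hsub_Usg]
    exact hH

end Aux5

theorem stmt_1 {G I : Type*} [Group G] [Nonempty I] :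
    Howson (Brandt G I) ↔ HowsonGroup G := by
  constructor
  · intro hB H K hH hK
    obtain ⟨i⟩ := ‹Nonempty I›
    have hInter := hB (Usg H i) (Usg K i) (isInvSub_Usg H i) (isInvSub_Usg K i)
      (invFG_Usg H hH i) (invFG_Usg K hK i)
    have hW : IsInvSub (Usg H i ∩ Usg K i) :=
      isInvSub_inter (isInvSub_Usg H i) (isInvSub_Usg K i)
    have hiW : i ∈ Dom (Usg H i ∩ Usg K i) :=
      ⟨1, ⟨1, H.one_mem, rfl⟩, ⟨1, K.one_mem, rfl⟩⟩
    have hfg := fg_of_invFG hW hInter hiW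
    have heq : Hsub (Usg H i ∩ Usg K i) hW hiW = H ⊓ K := by
      ext g
      rw [mem_Hsub, Subgroup.mem_inf]
      constructor
      · rintro ⟨⟨h, hh, heqh⟩, ⟨k, hk, heqk⟩⟩
        simp only [Option.some.injEq, Prod.mk.injEq] at heqh heqk
        exact ⟨heqh.2.1 ▸ hh, heqk.2.1 ▸ hk⟩
      · rintro ⟨hg1, hg2⟩
        exact ⟨⟨g, hg1, rfl⟩, ⟨g, hg2, rfl⟩⟩
    rwa [heq] at hfg
  · intro hG U V hU hV hUfg hVfg
    have hW : IsInvSub (U ∩ V) := isInvSub_inter hU hV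
    apply invFG_of_struct hW
    · exact Set.Finite.subset (dom_finite hUfg) (fun j ⟨g, hg⟩ => ⟨g, hg.1⟩)
    · intro j hj
      have hjU : j ∈ Dom U := by obtain ⟨g, hg⟩ := hj; exact ⟨g, hg.1⟩
      have hjV : j ∈ Dom V := by obtain ⟨g, hg⟩ := hj; exact ⟨g, hg.2⟩
      have heq : Hsub (U ∩ V) hW hj = Hsub U hU hjU ⊓ Hsub V hV hjV := by
        ext g
        rw [mem_Hsub, Subgroup.mem_inf, mem_Hsub, mem_Hsub]
        exact Iff.rfl
      rw [heq]
      exact hG _ _ (fg_of_invFG hU hUfg hjU) (fg_of_invFG hV hVfg hjV)
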